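/- Let $P'(1) > 0$, $\eta+\mu > 0$, $\nu > 0$, and choose $\delta_* \in (0, \min\{1/2, (\eta+\mu)/2\}]$ and $b_0 \in (0, \sqrt{P'(1)/(\eta+\mu)}]$ with $\delta_* b_0 \le \min\{P'(1)/2, 1/2\}$. For $\xi$ with $|\xi| \le b_0$, define $\ell(\xi,t) = \frac{1}{2}\big(P'(1)|\hat{q}|^2 + |\hat{\Upsilon}|^2 + |\hat{M}|^2 - 2\delta_*|\xi|\mathrm{Re}(\hat{q}\overline{\hat{\Upsilon}})\big)$ where $(\hat{q},\hat{\Upsilon},\hat{M})$ solve the linear system $\partial_t\hat{q} + |\xi|\hat{\Upsilon}=0$, $\partial_t\hat{\Upsilon} - P'(1)|\xi|\hat{q} + (\eta+\mu)|\xi|^2\hat{\Upsilon}=0$, $\partial_t\hat{M} + \nu|\xi|^2\hat{M}=0$. Then there exists a constant $C_l > 0$ depending only on $P'(1),\eta,\mu,\nu,\delta_*$ such that $\ell(\xi,t) \le e^{-C_l|\xi|^2 t}\,\ell(\xi,0)$ for all $t \ge 0$ and $|\xi| \le b_0$. -/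

import Mathlib

set_option maxHeartbeats 1000000

private lemma key_ineq (P1 em ν δ Cl r A B C E : ℝ)
    (hP1 : 0 < P1) (hem : 0 < em) (hν : 0 < ν) (hδ : 0 < δ)
    (hδ1 : δ ≤ 1/2) (hδ2 : δ ≤ em/2) (hr : 0 ≤ r)
    (hr2 : em * r^2 ≤ P1) (hδr1 : δ*r ≤ 1/2) (hδr2 : δ*r ≤ P1/2)
    (hA : 0 ≤ A) (hB : 0 ≤ B) (hC : 0 ≤ C) (hE : E^2 ≤ A*B)
    (hCl0 : 0 ≤ Cl) (hCl1 : Cl ≤ 2*δ/3) (hCl2 : Cl ≤ em/3) (hCl3 : Cl ≤ 2*ν) :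
    Cl * ((P1*A + B + C - 2*δ*r*E)/2) ≤ (em-δ)*B + ν*C + δ*P1*A - δ*em*r*E := by
  have hs : (em*r)^2 ≤ em*P1 := by nlinarith
  have h1 : 2*(em*r)*E ≤ P1*A + em*B := by
    have h1a : (2*(em*r)*E)^2 ≤ (P1*A + em*B)^2 := by
      nlinarith [mul_le_mul_of_nonneg_right hs (sq_nonneg E),
        mul_le_mul_of_nonneg_left hE (mul_nonneg hem.le hP1.le),
        sq_nonneg (P1*A - em*B)]
    have h1b : 0 ≤ P1*A + em*B := by positivity
    nlinarith [h1a, h1b]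
  have h2 : -(2*E) ≤ A + B := by nlinarith [sq_nonneg (A - B), sq_nonneg (A+B)]
  have hS : (P1*A + B + C - 2*δ*r*E)/2 ≤ 3/4*P1*A + 3/4*B + 1/2*C := by
    have h3 := mul_le_mul_of_nonneg_left h2 (mul_nonneg hδ.le hr)
    have h4 := mul_le_mul_of_nonneg_right hδr2 hA
    have h5 := mul_le_mul_of_nonneg_right hδr1 hB
    nlinarith [h3, h4, h5]
  have hClS : Cl * (3/4*P1*A + 3/4*B + 1/2*C) ≤ δ*P1/2*A + em/4*B + ν*C := by
    have h4 := mul_le_mul_of_nonneg_right hCl1 (mul_nonneg hP1.le hA)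
    have h5 := mul_le_mul_of_nonneg_right hCl2 hB
    have h6 := mul_le_mul_of_nonneg_right hCl3 hC
    linarith [h4, h5, h6]
  have hD : δ*P1/2*A + em/4*B + ν*C ≤ (em-δ)*B + ν*C + δ*P1*A - δ*em*r*E := by
    have h7 := mul_le_mul_of_nonneg_left h1 (by positivity : (0:ℝ) ≤ δ/2)
    have h8 := mul_le_mul_of_nonneg_right hδ2 hB
    have h9 := mul_le_mul_of_nonneg_right hδ1 (mul_nonneg hem.le hB)
    nlinarith [h7, h8, h9]
  calc Cl * ((P1*A + B + C - 2*δ*r*E)/2) ≤ Cl * (3/4*P1*A + 3/4*B + 1/2*C) :=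
        mul_le_mul_of_nonneg_left hS hCl0
    _ ≤ δ*P1/2*A + em/4*B + ν*C := hClS
    _ ≤ (em-δ)*B + ν*C + δ*P1*A - δ*em*r*E := hD

/-- Low-frequency exponential decay of the modified energy `ℓ(ξ,t)` for the
linearized compressible MHD system: `ℓ(ξ,t) ≤ e^{-C_l |ξ|² t} ℓ(ξ,0)` for `|ξ| ≤ b₀`. -/
theorem low_freq_modified_energy_decay
    (P1 η μ ν δ b₀ : ℝ) (hP1 : 0 < P1) (hημ : 0 < η + μ) (hν : 0 < ν)
    (hδ : 0 < δ) (hδle : δ ≤ min (1 / 2) ((η + μ) / 2))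
    (hb₀ : 0 < b₀) (hb₀le : b₀ ≤ Real.sqrt (P1 / (η + μ)))
    (hδb₀ : δ * b₀ ≤ min (P1 / 2) (1 / 2)) :
    ∃ Cl > (0 : ℝ), ∀ (ξ : EuclideanSpace ℝ (Fin 3)), ‖ξ‖ ≤ b₀ →
      ∀ (q Υ M : ℝ → ℂ),
      (∀ t : ℝ, HasDerivAt q (-(‖ξ‖ : ℂ) * Υ t) t) →
      (∀ t : ℝ, HasDerivAt Υ ((P1 : ℂ) * (‖ξ‖ : ℂ) * q t
          - ((η + μ : ℝ) : ℂ) * (‖ξ‖ : ℂ) ^ 2 * Υ t) t) →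
      (∀ t : ℝ, HasDerivAt M (-((ν : ℂ) * (‖ξ‖ : ℂ) ^ 2) * M t) t) →
      ∀ t : ℝ, 0 ≤ t →
        (P1 * ‖q t‖ ^ 2 + ‖Υ t‖ ^ 2 + ‖M t‖ ^ 2
            - 2 * δ * ‖ξ‖ * (q t * (starRingEnd ℂ) (Υ t)).re) / 2
          ≤ Real.exp (-Cl * ‖ξ‖ ^ 2 * t) *
            ((P1 * ‖q 0‖ ^ 2 + ‖Υ 0‖ ^ 2 + ‖M 0‖ ^ 2
              - 2 * δ * ‖ξ‖ * (q 0 * (starRingEnd ℂ) (Υ 0)).re) / 2) := by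
  have hδ1 : δ ≤ 1/2 := le_trans hδle (min_le_left _ _)
  have hδ2 : δ ≤ (η+μ)/2 := le_trans hδle (min_le_right _ _)
  refine ⟨min (2*δ/3) (min ((η+μ)/3) (2*ν)), lt_min (by linarith) (lt_min (by linarith) (by linarith)), ?_⟩
  set Cl := min (2*δ/3) (min ((η+μ)/3) (2*ν)) with hCldef
  have hCl0 : 0 ≤ Cl := le_of_lt (lt_min (by linarith) (lt_min (by linarith) (by linarith)))
  have hCl1 : Cl ≤ 2*δ/3 := min_le_left _ _
  have hCl2 : Cl ≤ (η+μ)/3 := le_trans (min_le_right _ _) (min_le_left _ _)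
  have hCl3 : Cl ≤ 2*ν := le_trans (min_le_right _ _) (min_le_right _ _)
  intro ξ hξ q Υ M hq hΥ hM t ht
  set r := ‖ξ‖ with hrdef
  have hr0 : 0 ≤ r := norm_nonneg ξ
  have hb2 : b₀^2 ≤ P1/(η+μ) := by
    calc b₀^2 ≤ Real.sqrt (P1/(η+μ))^2 := by
          exact pow_le_pow_left₀ hb₀.le hb₀le 2
      _ = P1/(η+μ) := Real.sq_sqrt (div_pos hP1 hημ).le
  have hr2 : (η+μ)*r^2 ≤ P1 := by
    have h1 : r^2 ≤ P1/(η+μ) := le_trans (pow_le_pow_left₀ hr0 hξ 2) hb2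
    calc (η+μ)*r^2 ≤ (η+μ)*(P1/(η+μ)) := by
          exact mul_le_mul_of_nonneg_left h1 hημ.le
      _ = P1 := by field_simp
  have hδr : δ*r ≤ δ*b₀ := mul_le_mul_of_nonneg_left hξ hδ.le
  have hδr1 : δ*r ≤ 1/2 := le_trans hδr (le_trans hδb₀ (min_le_right _ _))
  have hδr2 : δ*r ≤ P1/2 := le_trans hδr (le_trans hδb₀ (min_le_left _ _))
  -- real and imaginary components
  set q1 : ℝ → ℝ := fun s => (q s).re with hq1def
  set q2 : ℝ → ℝ := fun s => (q s).im with hq2def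
  set u1 : ℝ → ℝ := fun s => (Υ s).re with hu1def
  set u2 : ℝ → ℝ := fun s => (Υ s).im with hu2def
  set m1 : ℝ → ℝ := fun s => (M s).re with hm1def
  set m2 : ℝ → ℝ := fun s => (M s).im with hm2def
  have hq1 : ∀ s, HasDerivAt q1 (-(r * u1 s)) s := fun s => by
    simpa [Function.comp_def] using Complex.reCLM.hasFDerivAt.comp_hasDerivAt s (hq s)
  have hq2 : ∀ s, HasDerivAt q2 (-(r * u2 s)) s := fun s => by
    simpa [Function.comp_def] using Complex.imCLM.hasFDerivAt.comp_hasDerivAt s (hq s)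
  have hu1 : ∀ s, HasDerivAt u1 (P1*r*q1 s - (η+μ)*r^2*u1 s) s := fun s => by
    have h := Complex.reCLM.hasFDerivAt.comp_hasDerivAt s (hΥ s)
    simpa [Function.comp_def, Complex.mul_re, Complex.sub_re, pow_two] using h
  have hu2 : ∀ s, HasDerivAt u2 (P1*r*q2 s - (η+μ)*r^2*u2 s) s := fun s => by
    have h := Complex.imCLM.hasFDerivAt.comp_hasDerivAt s (hΥ s)
    simpa [Function.comp_def, Complex.mul_im, Complex.sub_im, pow_two] using h
  have hm1 : ∀ s, HasDerivAt m1 (-(ν*r^2*m1 s)) s := fun s => by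
    have h := Complex.reCLM.hasFDerivAt.comp_hasDerivAt s (hM s)
    simpa [Function.comp_def, Complex.mul_re, pow_two] using h
  have hm2 : ∀ s, HasDerivAt m2 (-(ν*r^2*m2 s)) s := fun s => by
    have h := Complex.imCLM.hasFDerivAt.comp_hasDerivAt s (hM s)
    simpa [Function.comp_def, Complex.mul_im, pow_two] using h
  -- the modified energy
  set L : ℝ → ℝ := fun s => (P1*(q1 s^2+q2 s^2) + (u1 s^2+u2 s^2) + (m1 s^2+m2 s^2)
      - 2*δ*r*(q1 s*u1 s + q2 s*u2 s))/2 with hLdef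
  set L' : ℝ → ℝ := fun s => (P1*(2*q1 s*(-(r*u1 s)) + 2*q2 s*(-(r*u2 s)))
      + (2*u1 s*(P1*r*q1 s - (η+μ)*r^2*u1 s) + 2*u2 s*(P1*r*q2 s - (η+μ)*r^2*u2 s))
      + (2*m1 s*(-(ν*r^2*m1 s)) + 2*m2 s*(-(ν*r^2*m2 s)))
      - 2*δ*r*((-(r*u1 s))*u1 s + q1 s*(P1*r*q1 s - (η+μ)*r^2*u1 s)
          + (-(r*u2 s))*u2 s + q2 s*(P1*r*q2 s - (η+μ)*r^2*u2 s)))/2 with hL'def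
  have hL : ∀ s, HasDerivAt L (L' s) s := fun s => by
    have h : HasDerivAt (fun s => (P1*(q1 s^2+q2 s^2) + (u1 s^2+u2 s^2) + (m1 s^2+m2 s^2)
        - 2*δ*r*(q1 s*u1 s + q2 s*u2 s))/2)
        ((P1*((2:ℕ)*q1 s^1*(-(r*u1 s)) + (2:ℕ)*q2 s^1*(-(r*u2 s)))
          + ((2:ℕ)*u1 s^1*(P1*r*q1 s - (η+μ)*r^2*u1 s) + (2:ℕ)*u2 s^1*(P1*r*q2 s - (η+μ)*r^2*u2 s))
          + ((2:ℕ)*m1 s^1*(-(ν*r^2*m1 s)) + (2:ℕ)*m2 s^1*(-(ν*r^2*m2 s)))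
          - 2*δ*r*((-(r*u1 s))*u1 s + q1 s*(P1*r*q1 s - (η+μ)*r^2*u1 s)
              + ((-(r*u2 s))*u2 s + q2 s*(P1*r*q2 s - (η+μ)*r^2*u2 s))))/2) s := by
      exact (((((((hq1 s).pow 2).add ((hq2 s).pow 2)).const_mul P1).add
        (((hu1 s).pow 2).add ((hu2 s).pow 2))).add
        (((hm1 s).pow 2).add ((hm2 s).pow 2))).sub
        ((((hq1 s).mul (hu1 s)).add ((hq2 s).mul (hu2 s))).const_mul (2*δ*r))).div_const 2
    convert h using 1
    simp only [hL'def]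
    push_cast
    ring
  -- derivative inequality
  have hkey : ∀ s, Cl*r^2 * L s + L' s ≤ 0 := by
    intro s
    have hCS : (q1 s*u1 s + q2 s*u2 s)^2 ≤ (q1 s^2+q2 s^2)*(u1 s^2+u2 s^2) := by
      nlinarith [sq_nonneg (q1 s*u2 s - q2 s*u1 s)]
    have hk := key_ineq P1 (η+μ) ν δ Cl r (q1 s^2+q2 s^2) (u1 s^2+u2 s^2) (m1 s^2+m2 s^2)
      (q1 s*u1 s + q2 s*u2 s) hP1 hημ hν hδ hδ1 hδ2 hr0 hr2 hδr1 hδr2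
      (by positivity) (by positivity) (by positivity) hCS hCl0 hCl1 hCl2 hCl3
    have heq : Cl*r^2 * L s + L' s
        = r^2 * (Cl * ((P1*(q1 s^2+q2 s^2) + (u1 s^2+u2 s^2) + (m1 s^2+m2 s^2)
            - 2*δ*r*(q1 s*u1 s + q2 s*u2 s))/2)
          - (((η+μ)-δ)*(u1 s^2+u2 s^2) + ν*(m1 s^2+m2 s^2) + δ*P1*(q1 s^2+q2 s^2)
            - δ*(η+μ)*r*(q1 s*u1 s + q2 s*u2 s))) := by
      simp only [hLdef, hL'def]; ring
    rw [heq]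
    exact mul_nonpos_of_nonneg_of_nonpos (sq_nonneg r) (by linarith)
  -- Gronwall
  set G : ℝ → ℝ := fun s => Real.exp (Cl*r^2*s) * L s with hGdef
  have hG : ∀ s, HasDerivAt G (Cl*r^2*Real.exp (Cl*r^2*s) * L s + Real.exp (Cl*r^2*s) * L' s) s := by
    intro s
    have he : HasDerivAt (fun s => Real.exp (Cl*r^2*s)) (Cl*r^2*Real.exp (Cl*r^2*s)) s := by
      have h1 : HasDerivAt (fun s : ℝ => Cl*r^2*s) (Cl*r^2) s := by
        simpa using (hasDerivAt_id s).const_mul (Cl*r^2)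
      simpa [mul_comm] using h1.exp
    exact he.mul (hL s)
  have hanti : Antitone G := by
    apply antitone_of_deriv_nonpos (fun s => (hG s).differentiableAt)
    intro s
    rw [(hG s).deriv]
    have h1 := hkey s
    have h2 := mul_le_mul_of_nonneg_left h1 (Real.exp_nonneg (Cl*r^2*s))
    nlinarith [h2]
  have hGt : G t ≤ G 0 := hanti ht
  have hG0 : G 0 = L 0 := by simp [hGdef]
  have hfin : L t ≤ Real.exp (-Cl*r^2*t) * L 0 := by
    have h1 : Real.exp (Cl*r^2*t) * L t ≤ L 0 := by rw [← hG0]; exact hGt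
    have h2 := mul_le_mul_of_nonneg_left h1 (Real.exp_nonneg (-Cl*r^2*t))
    calc L t = Real.exp (-Cl*r^2*t) * (Real.exp (Cl*r^2*t) * L t) := by
          rw [← mul_assoc, ← Real.exp_add]; ring_nf; simp
      _ ≤ Real.exp (-Cl*r^2*t) * L 0 := h2
  -- translate to the stated form
  have hnorm : ∀ s, (P1 * ‖q s‖ ^ 2 + ‖Υ s‖ ^ 2 + ‖M s‖ ^ 2
      - 2 * δ * r * (q s * (starRingEnd ℂ) (Υ s)).re) / 2 = L s := by
    intro s
    simp only [hLdef, hq1def, hq2def, hu1def, hu2def, hm1def, hm2def]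
    have hz : ∀ z : ℂ, ‖z‖^2 = z.re^2 + z.im^2 := fun z => by
      rw [Complex.sq_norm, Complex.normSq_apply]; ring
    rw [hz, hz, hz]
    simp only [Complex.mul_re, Complex.conj_re, Complex.conj_im]
    ring
  rw [hnorm t, hnorm 0]
  exact hfin
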